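/- Let K be a totally real number field of degree e over ℚ with real embeddings σ₁,…,σ_e. For any nonnegative integers ℓ, k with ℓ ≤ e and k ≤ e, there exist elements η, γ ∈ K such that η has exactly ℓ negative conjugates (i.e. #{i : σ_i(η) < 0} = ℓ), γ has exactly k negative conjugates, and η + γ has exactly ℓ + k negative conjugates. -/

import Mathlib

open NumberField

private lemma card_filter_val (e : ℕ) (P : ℕ → Prop) [DecidablePred P] :
    (Finset.univ.filter fun i : Fin e => P i.val).card
      = ((Finset.range e).filter P).card := by
  classical
  rw [← Nat.Iio_eq_range, ← Fin.map_valEmbedding_univ, Finset.filter_map,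
    Finset.card_map]
  rfl

private lemma approx_lemma (K : Type*) [Field K] [NumberField K] (e : ℕ)
    (hdeg : Module.finrank ℚ K = e)
    (σ : Fin e → (K →+* ℝ)) (hσ : Function.Bijective σ) (t : Fin e → ℝ) :
    ∃ a : K, ∀ i, |σ i a - t i| < 1 := by
  classical
  obtain ⟨b⟩ : Nonempty (Module.Basis (Fin e) ℚ K) := ⟨Module.finBasisOfFinrankEq ℚ K hdeg⟩
  set M : Matrix (Fin e) (Fin e) ℝ := fun i j => σ i (b j) with hMdef
  -- key computation: σ i of a rational combination of basis vectors
  have hcomb : ∀ (q : Fin e → ℚ) (i : Fin e),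
      σ i (∑ j, q j • b j) = ∑ j, (q j : ℝ) * M i j := by
    intro q i
    rw [map_sum]
    refine Finset.sum_congr rfl fun j _ => ?_
    rw [Rat.smul_def, map_mul, map_ratCast]
  -- rows of M are linearly independent over ℝ
  have hM : IsUnit M := by
    rw [← Matrix.linearIndependent_rows_iff_isUnit]
    rw [Fintype.linearIndependent_iff]
    intro c hc
    have hc' : ∀ j, ∑ i, c i * M i j = 0 := by
      intro j
      have := congrFun hc j
      simpa [Finset.sum_apply] using this
    -- the combination vanishes on all of K
    have hall : ∀ x : K, ∑ i, c i * σ i x = 0 := by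
      intro x
      have hx : x = ∑ j, b.repr x j • b j := (Module.Basis.sum_repr b x).symm
      rw [hx]
      calc ∑ i, c i * σ i (∑ j, b.repr x j • b j)
          = ∑ i, c i * ∑ j, ((b.repr x j : ℝ)) * M i j := by
            refine Finset.sum_congr rfl fun i _ => ?_
            rw [hcomb]
        _ = ∑ j, (b.repr x j : ℝ) * ∑ i, c i * M i j := by
            simp_rw [Finset.mul_sum]
            rw [Finset.sum_comm]
            exact Finset.sum_congr rfl fun j _ => Finset.sum_congr rfl fun i _ => by ring
        _ = 0 := by simp [hc']
    -- Dedekind independence of characters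
    have hinj : Function.Injective (fun i : Fin e => ((σ i : K →+* ℝ) : K →* ℝ)) := by
      intro i j hij
      apply hσ.injective
      ext x
      exact congrFun (congrArg (fun f : K →* ℝ => (f : K → ℝ)) hij) x
    have hli : LinearIndependent ℝ
        (fun i : Fin e => (((σ i : K →+* ℝ) : K →* ℝ) : K → ℝ)) :=
      (linearIndependent_monoidHom K ℝ).comp _ hinj
    rw [Fintype.linearIndependent_iff] at hli
    refine hli c ?_
    funext x
    simpa [Finset.sum_apply] using hall x
  -- solve M.mulVec c = t
  obtain ⟨c, hc⟩ := Matrix.mulVec_surjective_iff_isUnit.2 hM t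
  -- bound
  set B : ℝ := (∑ i, ∑ j, |M i j|) + 1 with hBdef
  have hB0 : 0 < B := by
    have : (0:ℝ) ≤ ∑ i, ∑ j, |M i j| :=
      Finset.sum_nonneg fun i _ => Finset.sum_nonneg fun j _ => abs_nonneg _
    linarith
  have hδ : (0:ℝ) < 1 / B := by positivity
  -- approximate c by rationals
  choose q hq using fun j => exists_rat_near (c j) hδ
  refine ⟨∑ j, q j • b j, fun i => ?_⟩
  have hti : t i = ∑ j, M i j * c j := by rw [← hc]; rfl
  rw [hcomb, hti]
  have : ∑ j, (q j : ℝ) * M i j - ∑ j, M i j * c j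
      = ∑ j, ((q j : ℝ) - c j) * M i j := by
    rw [← Finset.sum_sub_distrib]
    refine Finset.sum_congr rfl fun j _ => ?_
    ring
  rw [this]
  calc |∑ j, ((q j : ℝ) - c j) * M i j|
      ≤ ∑ j, |((q j : ℝ) - c j) * M i j| := Finset.abs_sum_le_sum_abs _ _
    _ ≤ ∑ j, (1 / B) * |M i j| := by
        refine Finset.sum_le_sum fun j _ => ?_
        rw [abs_mul]
        have := (hq j).le
        have h1 : |(q j : ℝ) - c j| ≤ 1 / B := by
          have := hq j
          rw [abs_sub_comm] at this
          linarith
        exact mul_le_mul_of_nonneg_right h1 (abs_nonneg _)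
    _ = (1 / B) * ∑ j, |M i j| := by rw [Finset.mul_sum]
    _ < 1 := by
        have hle : ∑ j, |M i j| ≤ ∑ i', ∑ j, |M i' j| :=
          Finset.single_le_sum (f := fun i' => ∑ j, |M i' j|)
            (fun i' _ => Finset.sum_nonneg fun j _ => abs_nonneg _)
            (Finset.mem_univ i)
        rw [div_mul_eq_mul_div, one_mul, div_lt_one hB0]
        linarith

/-- For a totally real number field `K` of degree `e` over `ℚ`, with real embeddings
`σ 0, …, σ (e-1)`, and nonnegative integers `ℓ, k` with `ℓ + k ≤ e`, there exist
`η, γ ∈ K` having exactly `ℓ`, `k`, and `ℓ + k` negative conjugates respectively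
(for `η`, `γ`, and `η + γ`). -/
theorem stmt1 (K : Type*) [Field K] [NumberField K] (e : ℕ)
    (hdeg : Module.finrank ℚ K = e)
    (σ : Fin e → (K →+* ℝ)) (hσ : Function.Bijective σ)
    (ℓ k : ℕ) (hℓ : ℓ ≤ e) (hk : k ≤ e) (hℓk : ℓ + k ≤ e) :
    ∃ η γ : K,
      (Finset.univ.filter fun i => σ i η < 0).card = ℓ ∧
      (Finset.univ.filter fun i => σ i γ < 0).card = k ∧
      (Finset.univ.filter fun i => σ i (η + γ) < 0).card = ℓ + k := by
  classical
  obtain ⟨η, hη⟩ := approx_lemma K e hdeg σ hσ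
    (fun i => if (i : ℕ) < ℓ then (-3 : ℝ) else 1)
  obtain ⟨γ, hγ⟩ := approx_lemma K e hdeg σ hσ
    (fun i => if (ℓ ≤ (i : ℕ) ∧ (i : ℕ) < ℓ + k) then (-3 : ℝ) else 1)
  have sign_η : ∀ i : Fin e, (σ i η < 0 ↔ (i : ℕ) < ℓ) := by
    intro i
    have h := abs_lt.1 (hη i)
    by_cases hi : (i : ℕ) < ℓ
    · rw [if_pos hi] at h
      exact ⟨fun _ => hi, fun _ => by linarith [h.2]⟩
    · rw [if_neg hi] at h
      exact ⟨fun hh => absurd (by linarith [h.1] : ¬ σ i η < 0) (by simpa using hh),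
        fun hh => absurd hh hi⟩
  have sign_γ : ∀ i : Fin e, (σ i γ < 0 ↔ (ℓ ≤ (i : ℕ) ∧ (i : ℕ) < ℓ + k)) := by
    intro i
    have h := abs_lt.1 (hγ i)
    by_cases hi : ℓ ≤ (i : ℕ) ∧ (i : ℕ) < ℓ + k
    · rw [if_pos hi] at h
      exact ⟨fun _ => hi, fun _ => by linarith [h.2]⟩
    · rw [if_neg hi] at h
      exact ⟨fun hh => absurd (by linarith [h.1] : ¬ σ i γ < 0) (by simpa using hh),
        fun hh => absurd hh hi⟩
  have sign_s : ∀ i : Fin e, (σ i η + σ i γ < 0 ↔ (i : ℕ) < ℓ + k) := by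
    intro i
    have h1 := abs_lt.1 (hη i)
    have h2 := abs_lt.1 (hγ i)
    by_cases hi' : (i : ℕ) < ℓ
    · rw [if_pos hi'] at h1
      rw [if_neg (by omega)] at h2
      exact ⟨fun _ => by omega, fun _ => by linarith [h1.2, h2.2]⟩
    · by_cases hi'' : (i : ℕ) < ℓ + k
      · rw [if_neg hi'] at h1
        rw [if_pos ⟨by omega, hi''⟩] at h2
        exact ⟨fun _ => hi'', fun _ => by linarith [h1.2, h2.2]⟩
      · rw [if_neg hi'] at h1
        rw [if_neg (by omega)] at h2
        refine ⟨fun hh => absurd hh (by linarith [h1.1, h2.1]), fun hh => absurd hh hi''⟩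
  refine ⟨η, γ, ?_, ?_, ?_⟩
  · rw [Finset.filter_congr fun i _ => sign_η i, card_filter_val e (fun n => n < ℓ)]
    have : (Finset.range e).filter (fun n => n < ℓ) = Finset.range ℓ := by
      ext n; simp only [Finset.mem_filter, Finset.mem_range]; omega
    rw [this, Finset.card_range]
  · rw [Finset.filter_congr fun i _ => sign_γ i,
      card_filter_val e (fun n => ℓ ≤ n ∧ n < ℓ + k)]
    have : (Finset.range e).filter (fun n => ℓ ≤ n ∧ n < ℓ + k)
        = Finset.Ico ℓ (ℓ + k) := by
      ext n; simp only [Finset.mem_filter, Finset.mem_range, Finset.mem_Ico]; omega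
    rw [this, Nat.card_Ico]
    omega
  · simp only [map_add]
    rw [Finset.filter_congr fun i _ => sign_s i,
      card_filter_val e (fun n => n < ℓ + k)]
    have : (Finset.range e).filter (fun n => n < ℓ + k) = Finset.range (ℓ + k) := by
      ext n; simp only [Finset.mem_filter, Finset.mem_range]; omega
    rw [this, Finset.card_range]
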